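/- Define α_d(n) recursively by α_1(n) = 1 and α_{d+1}(n) = 1/2 + sqrt(2n·α_d(n) + 1/4). Then for all d ≥ 2 and n ≥ 1, (2n)^(1 - 2^(1-d)) ≤ α_d(n) ≤ (4n)^(1 - 2^(1-d)). -/

import Mathlib

noncomputable def alpha (n : ℕ) : ℕ → ℝ
  | 0 => 1
  | 1 => 1
  | (d + 2) => 1 / 2 + Real.sqrt (2 * n * alpha n (d + 1) + 1 / 4)

lemma upper_step (x a U M : ℝ) (hx : 1 ≤ x) (hM2 : M ^ 2 = 4 * x * U)
    (hMge : 2 ≤ M) (le_U : a ≤ U) (ha : 0 ≤ a) :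
    2 * x * a + 1 / 4 ≤ (M - 1 / 2) ^ 2 := by
  have hM0 : (0:ℝ) ≤ M := by linarith
  have hMle : M ≤ 2 * x * U := by
    nlinarith [mul_nonneg (by linarith : (0:ℝ) ≤ M - 2) hM0]
  have h2 : 2 * x * a ≤ 2 * x * U :=
    mul_le_mul_of_nonneg_left le_U (by linarith)
  nlinarith

lemma alpha_bounds_aux (n : ℕ) (hn : 1 ≤ n) : ∀ d : ℕ, 1 ≤ d →
    ((2 * n : ℝ)) ^ ((1 : ℝ) - 2 ^ ((1 : ℝ) - d)) ≤ alpha n d ∧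
      alpha n d ≤ ((4 * n : ℝ)) ^ ((1 : ℝ) - 2 ^ ((1 : ℝ) - d)) := by
  have hx : (1 : ℝ) ≤ (n : ℝ) := by exact_mod_cast hn
  intro d
  induction d with
  | zero => intro h; omega
  | succ d ih =>
    intro _
    rcases Nat.eq_zero_or_pos d with hd0 | hd1
    · subst hd0
      norm_num [alpha]
    · obtain ⟨L_le, le_U⟩ := ih hd1
      have hd1R : (1 : ℝ) ≤ (d : ℝ) := by exact_mod_cast hd1
      set x : ℝ := (n : ℝ)
      have h2x : (0 : ℝ) < 2 * x := by linarith
      have h4x : (0 : ℝ) < 4 * x := by linarith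
      set e₀ : ℝ := (1 : ℝ) - 2 ^ ((1 : ℝ) - (d : ℝ)) with he₀def
      set L : ℝ := (2 * x) ^ e₀ with hLdef
      set U : ℝ := (4 * x) ^ e₀ with hUdef
      -- exponent at d+1
      have hcast : ((d + 1 : ℕ) : ℝ) = (d : ℝ) + 1 := by push_cast; ring
      have hexp : (1 : ℝ) - ((d + 1 : ℕ) : ℝ) = -(d : ℝ) := by rw [hcast]; ring
      set e₁ : ℝ := (1 : ℝ) - 2 ^ (-(d : ℝ)) with he₁def
      have hgoal_exp : (1 : ℝ) - 2 ^ ((1 : ℝ) - ((d + 1 : ℕ) : ℝ)) = e₁ := by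
        rw [hexp]
      have hdouble : e₁ * 2 = 1 + e₀ := by
        have : (2 : ℝ) ^ ((1 : ℝ) - (d : ℝ)) = 2 ^ (1 : ℝ) * 2 ^ (-(d : ℝ)) := by
          rw [← Real.rpow_add (by norm_num : (0:ℝ) < 2)]
          ring_nf
        rw [he₁def, he₀def, this, Real.rpow_one]
        ring
      set m : ℝ := (2 * x) ^ e₁ with hmdef
      set M : ℝ := (4 * x) ^ e₁ with hMdef
      have hm0 : 0 ≤ m := Real.rpow_nonneg h2x.le _
      have hM0 : 0 ≤ M := Real.rpow_nonneg h4x.le _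
      have hm2 : m ^ 2 = 2 * x * L := by
        rw [hmdef, ← Real.rpow_natCast ((2*x) ^ e₁) 2, ← Real.rpow_mul h2x.le]
        push_cast
        rw [hdouble, Real.rpow_add h2x, Real.rpow_one]
      have hM2 : M ^ 2 = 4 * x * U := by
        rw [hMdef, ← Real.rpow_natCast ((4*x) ^ e₁) 2, ← Real.rpow_mul h4x.le]
        push_cast
        rw [hdouble, Real.rpow_add h4x, Real.rpow_one]
      have he₀ : 0 ≤ e₀ := by
        have : (2 : ℝ) ^ ((1 : ℝ) - (d : ℝ)) ≤ 1 :=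
          Real.rpow_le_one_of_one_le_of_nonpos (by norm_num) (by linarith)
        rw [he₀def]; linarith
      have hU1 : 1 ≤ U := by
        have := Real.rpow_le_rpow_of_exponent_le (by linarith : (1:ℝ) ≤ 4 * x) he₀
        rwa [Real.rpow_zero] at this
      have hM_ge2 : 2 ≤ M := by
        have hxU : 1 ≤ x * U := by nlinarith
        nlinarith [hM2, hM0]
      -- unfold alpha
      obtain ⟨e, rfl⟩ : ∃ e, d = e + 1 := ⟨d - 1, by omega⟩
      have halpha : alpha n (e + 1 + 1) =
          1 / 2 + Real.sqrt (2 * x * alpha n (e + 1) + 1 / 4) := by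
        simp [alpha]
        rfl
      set α : ℝ := alpha n (e + 1)
      have hα0 : 0 ≤ α := le_trans (Real.rpow_nonneg h2x.le _) L_le
      rw [hgoal_exp, ← hmdef, ← hMdef]
      clear_value x e₀ e₁ L U m M α
      constructor
      · -- lower bound
        have h1 : m ≤ Real.sqrt (2 * x * α + 1 / 4) := by
          rw [show m = Real.sqrt (m ^ 2) from (Real.sqrt_sq hm0).symm]
          apply Real.sqrt_le_sqrt
          nlinarith [L_le]
        rw [halpha]
        linarith
      · -- upper bound
        have h1 : Real.sqrt (2 * x * α + 1 / 4) ≤ M - 1 / 2 := by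
          rw [show M - 1/2 = Real.sqrt ((M - 1/2) ^ 2) from
            (Real.sqrt_sq (by linarith)).symm]
          apply Real.sqrt_le_sqrt
          exact upper_step x α U M hx hM2 hM_ge2 le_U hα0
        rw [halpha]
        linarith

theorem alpha_bounds (d n : ℕ) (hd : 2 ≤ d) (hn : 1 ≤ n) :
    ((2 * n : ℝ)) ^ ((1 : ℝ) - 2 ^ ((1 : ℝ) - d)) ≤ alpha n d ∧
      alpha n d ≤ ((4 * n : ℝ)) ^ ((1 : ℝ) - 2 ^ ((1 : ℝ) - d)) := by
  exact alpha_bounds_aux n hn d (by omega)
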